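/- Let f : [0,∞) → ℝ be a continuous function with f(t) > 0 for all t ≥ 0, let A > 0 be a constant, let k : [0,∞) → ℝ be a nonnegative and nondecreasing function, and let G : [0,∞) → ℝ satisfy lim_{t→∞} G(t)/t = 0. Suppose that for all t ≥ 0 one has the identity ln f(t) = ln f(0) + A·∫₀ᵗ (1/f(s)) ds − k(t) − G(t). Then limsup_{t→∞} (1/t)·ln f(t) ≤ 0. -/

import Mathlib

open MeasureTheory Filter

/-- Application of Lemma 3.4: if `ln f(t) = ln f(0) + A ∫₀ᵗ 1/f − k(t) − G(t)`
with `k` nonnegative nondecreasing and `G(t)/t → 0`, then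
`limsup (1/t) ln f(t) ≤ 0`. -/
theorem stmt1 (f k G : ℝ → ℝ) (A : ℝ) (hA : 0 < A)
    (hcont : ContinuousOn f (Set.Ici (0 : ℝ)))
    (hpos : ∀ t : ℝ, 0 ≤ t → 0 < f t)
    (hknn : ∀ t : ℝ, 0 ≤ t → 0 ≤ k t)
    (hkmono : ∀ s t : ℝ, 0 ≤ s → s ≤ t → k s ≤ k t)
    (hG : Tendsto (fun t => G t / t) atTop (nhds 0))
    (hid : ∀ t : ℝ, 0 ≤ t →
      Real.log (f t) = Real.log (f 0) + A * (∫ s in (0:ℝ)..t, 1 / f s) - k t - G t) :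
    Filter.limsup (fun t => (1 / t) * Real.log (f t)) atTop ≤ 0 := by
  have hf0 : 0 < f 0 := hpos 0 le_rfl
  set B : ℝ := A / f 0 with hBdef
  have hBpos : 0 < B := div_pos hA hf0
  have hgcont : ContinuousOn (fun s => 1 / f s) (Set.Ici (0:ℝ)) :=
    continuousOn_const.div hcont (fun x hx => (hpos x hx).ne')
  set φ : ℝ → ℝ := fun t => ∫ s in (0:ℝ)..t, 1 / f s with hφdef
  -- integrability of 1/f on subintervals of [0,∞)
  have hgint : ∀ a b : ℝ, 0 ≤ a → a ≤ b →
      IntervalIntegrable (fun s => 1 / f s) volume a b := by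
    intro a b ha hab
    apply ContinuousOn.intervalIntegrable
    apply hgcont.mono
    rw [Set.uIcc_of_le hab]
    exact fun x hx => le_trans ha hx.1
  -- continuity of the primitive
  have hφcont : ∀ b : ℝ, 0 ≤ b → ContinuousOn φ (Set.Icc 0 b) := by
    intro b hb
    have h1 : IntegrableOn (fun s => 1 / f s) (Set.uIcc (0:ℝ) b) volume := by
      rw [Set.uIcc_of_le hb]
      exact (intervalIntegrable_iff_integrableOn_Icc_of_le hb).1 (hgint 0 b le_rfl hb)
    have := intervalIntegral.continuousOn_primitive_interval h1
    rwa [Set.uIcc_of_le hb] at this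
  -- derivative of the primitive on (0,∞)
  have hd : ∀ x : ℝ, 0 < x → HasDerivAt φ (1 / f x) x := by
    intro x hx
    exact intervalIntegral.integral_hasDerivAt_right (hgint 0 x le_rfl hx.le)
      (ContinuousOn.stronglyMeasurableAtFilter isOpen_Ioi
        (hgcont.mono Set.Ioi_subset_Ici_self) x hx)
      (hgcont.continuousAt (Ici_mem_nhds hx))
  -- key identity for exp(k+G)
  have hkey : ∀ s : ℝ, 0 ≤ s →
      Real.exp (k s + G s) = f 0 * Real.exp (A * φ s) / f s := by
    intro s hs
    have h1 : k s + G s = Real.log (f 0) + A * φ s - Real.log (f s) := by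
      have := hid s hs; simp only [hφdef]; linarith
    rw [h1, Real.exp_sub, Real.exp_add, Real.exp_log hf0, Real.exp_log (hpos s hs)]
  -- integrability of the transformed integrand
  have hf'int : ∀ a b : ℝ, 0 ≤ a → a ≤ b →
      IntervalIntegrable (fun s => B * Real.exp (k s + G s)) volume a b := by
    intro a b ha hab
    apply ContinuousOn.intervalIntegrable
    have hsub : Set.uIcc a b ⊆ Set.Icc 0 b := by
      rw [Set.uIcc_of_le hab]; exact Set.Icc_subset_Icc ha le_rfl
    have hφc : ContinuousOn φ (Set.uIcc a b) := (hφcont b (ha.trans hab)).mono hsub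
    have hc1 : ContinuousOn (fun s => B * (f 0 * Real.exp (A * φ s) / f s))
        (Set.uIcc a b) := by
      refine continuousOn_const.mul (ContinuousOn.div ?_ ?_ ?_)
      · exact continuousOn_const.mul
          (Real.continuous_exp.comp_continuousOn (continuousOn_const.mul hφc))
      · exact hcont.mono (fun x hx => (hsub hx).1)
      · exact fun x hx => (hpos x (hsub hx).1).ne'
    refine hc1.congr (fun s hs => ?_)
    rw [hkey s (hsub hs).1]
  -- FTC: exp(A φ t) = 1 + ∫₀ᵗ B exp(k+G)
  have hFTC : ∀ t : ℝ, 0 ≤ t →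
      Real.exp (A * φ t) = 1 + ∫ s in (0:ℝ)..t, B * Real.exp (k s + G s) := by
    intro t ht
    have heq := intervalIntegral.integral_eq_sub_of_hasDeriv_right_of_le ht
      (f := fun x => Real.exp (A * φ x))
      (f' := fun s => B * Real.exp (k s + G s))
      (Real.continuous_exp.comp_continuousOn (continuousOn_const.mul (hφcont t ht)))
      (fun x hx => ?_) (hf'int 0 t le_rfl ht)
    · have hφ0 : φ 0 = 0 := intervalIntegral.integral_same
      rw [heq]
      simp only [hφ0, mul_zero, Real.exp_zero]
      ring
    · have hx0 : 0 < x := hx.1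
      have hd1 : HasDerivAt (fun x => Real.exp (A * φ x))
          (Real.exp (A * φ x) * (A * (1 / f x))) x := ((hd x hx0).const_mul A).exp
      have heq2 : Real.exp (A * φ x) * (A * (1 / f x)) = B * Real.exp (k x + G x) := by
        have h0 : f 0 ≠ 0 := hf0.ne'
        have hfx : f x ≠ 0 := (hpos x hx0.le).ne'
        rw [hkey x hx0.le, hBdef]
        field_simp
      have hdw := hd1.hasDerivWithinAt (s := Set.Ioi x)
      rw [heq2] at hdw
      exact hdw
  -- the main eventual bound for each c > 0
  have key : ∀ c : ℝ, 0 < c → ∀ᶠ t in atTop, (1 / t) * Real.log (f t) ≤ c := by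
    intro c hc
    set ε : ℝ := c / 2 with hεdef
    have hε : 0 < ε := by positivity
    obtain ⟨N, hN⟩ := Metric.tendsto_atTop.mp hG ε hε
    set T : ℝ := max N 1 with hTdef
    have hT1 : (1:ℝ) ≤ T := le_max_right N 1
    have hT0 : (0:ℝ) ≤ T := zero_le_one.trans hT1
    -- bound on [0,T]
    obtain ⟨C, hC⟩ := (isCompact_Icc (a := (0:ℝ)) (b := T)).exists_bound_of_continuousOn
      (f := fun s => f 0 * Real.exp (A * φ s) / f s)
      (by
        refine ContinuousOn.div ?_ ?_ ?_
        · exact continuousOn_const.mul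
            (Real.continuous_exp.comp_continuousOn (continuousOn_const.mul (hφcont T hT0)))
        · exact hcont.mono (fun x hx => hx.1)
        · exact fun x hx => (hpos x hx.1).ne')
    have hCbound : ∀ s ∈ Set.Icc (0:ℝ) T, Real.exp (k s + G s) ≤ C := by
      intro s hs
      rw [hkey s hs.1]
      exact (le_abs_self _).trans (hC s hs)
    have hC0 : 0 ≤ C := le_trans (Real.exp_pos _).le (hCbound 0 ⟨le_rfl, hT0⟩)
    set D : ℝ := 1 + B * C * T with hDdef
    have hD1 : (1:ℝ) ≤ D := by
      have : 0 ≤ B * C * T := by positivity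
      simp only [hDdef]; linarith
    -- eventual pointwise bound
    have hmain : ∀ t : ℝ, T ≤ t → (1 / t) * Real.log (f t) ≤
        Real.log (f 0) / t + (Real.log (D + B * t) / t + ε) - G t / t := by
      intro t hTt
      have ht1 : (1:ℝ) ≤ t := hT1.trans hTt
      have ht0 : (0:ℝ) < t := zero_lt_one.trans_le ht1
      -- split the integral
      have hsplit : (∫ s in (0:ℝ)..t, B * Real.exp (k s + G s)) =
          (∫ s in (0:ℝ)..T, B * Real.exp (k s + G s)) +
          (∫ s in T..t, B * Real.exp (k s + G s)) :=
        (intervalIntegral.integral_add_adjacent_intervals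
          (hf'int 0 T le_rfl hT0) (hf'int T t hT0 hTt)).symm
      -- bound the first part
      have hb1 : (∫ s in (0:ℝ)..T, B * Real.exp (k s + G s)) ≤ B * C * T := by
        have hm := intervalIntegral.integral_mono_on hT0 (hf'int 0 T le_rfl hT0)
          (intervalIntegrable_const (c := B * C))
          (fun x hx => mul_le_mul_of_nonneg_left (hCbound x hx) hBpos.le)
        have hconst : (∫ _ in (0:ℝ)..T, B * C) = (T - 0) * (B * C) := by
          rw [intervalIntegral.integral_const, smul_eq_mul]
        rw [hconst] at hm
        have : (T - 0) * (B * C) = B * C * T := by ring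
        linarith
      -- bound the second part
      have hb2 : (∫ s in T..t, B * Real.exp (k s + G s)) ≤
          t * (B * Real.exp (k t + ε * t)) := by
        have hptwise : ∀ x ∈ Set.Icc T t,
            B * Real.exp (k x + G x) ≤ B * Real.exp (k t + ε * t) := by
          intro x hx
          have hx0 : (0:ℝ) < x := zero_lt_one.trans_le (hT1.trans hx.1)
          have hk : k x ≤ k t := hkmono x t hx0.le hx.2
          have hGx : G x ≤ ε * x := by
            have hNx : N ≤ x := (le_max_left N 1).trans hx.1
            have := hN x hNx
            rw [Real.dist_eq, sub_zero] at this
            have h2 : G x / x ≤ ε := (le_abs_self _).trans this.le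
            calc G x = (G x / x) * x := by field_simp
              _ ≤ ε * x := mul_le_mul_of_nonneg_right h2 hx0.le
          have hGt : ε * x ≤ ε * t := mul_le_mul_of_nonneg_left hx.2 hε.le
          exact mul_le_mul_of_nonneg_left
            (Real.exp_le_exp.mpr (by linarith)) hBpos.le
        have hm := intervalIntegral.integral_mono_on hTt (hf'int T t hT0 hTt)
          (intervalIntegrable_const (c := B * Real.exp (k t + ε * t))) hptwise
        have hconst : (∫ _ in T..t, B * Real.exp (k t + ε * t)) =
            (t - T) * (B * Real.exp (k t + ε * t)) := by
          rw [intervalIntegral.integral_const, smul_eq_mul]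
        rw [hconst] at hm
        have hnn : 0 ≤ B * Real.exp (k t + ε * t) := by positivity
        nlinarith
      -- bound on exp(A φ t)
      have hFt : Real.exp (A * φ t) ≤ 1 + B * C * T + t * (B * Real.exp (k t + ε * t)) := by
        rw [hFTC t ht0.le, hsplit]; linarith
      -- key log inequality
      have h2 : Real.exp (A * φ t) * Real.exp (-(k t)) ≤ D + B * t * Real.exp (ε * t) := by
        have he1 : Real.exp (-(k t)) ≤ 1 :=
          Real.exp_le_one_iff.mpr (neg_nonpos.mpr (hknn t ht0.le))
        have he0 : (0:ℝ) < Real.exp (-(k t)) := Real.exp_pos _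
        have hmul : Real.exp (k t + ε * t) * Real.exp (-(k t)) = Real.exp (ε * t) := by
          rw [← Real.exp_add]; ring_nf
        calc Real.exp (A * φ t) * Real.exp (-(k t))
            ≤ (1 + B * C * T + t * (B * Real.exp (k t + ε * t))) * Real.exp (-(k t)) :=
              mul_le_mul_of_nonneg_right hFt he0.le
          _ = (1 + B * C * T) * Real.exp (-(k t)) +
              t * B * (Real.exp (k t + ε * t) * Real.exp (-(k t))) := by ring
          _ = (1 + B * C * T) * Real.exp (-(k t)) + t * B * Real.exp (ε * t) := by
              rw [hmul]
          _ ≤ (1 + B * C * T) * 1 + t * B * Real.exp (ε * t) := by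
              have h1 : 0 ≤ 1 + B * C * T := by positivity
              have := mul_le_mul_of_nonneg_left he1 h1
              linarith
          _ = D + B * t * Real.exp (ε * t) := by rw [hDdef]; ring
      have hDBpos : (0:ℝ) < D + B * t * Real.exp (ε * t) := by positivity
      have h3 : A * φ t - k t ≤ Real.log (D + B * t * Real.exp (ε * t)) := by
        have hll := Real.log_le_log (by positivity) h2
        rwa [Real.log_mul (Real.exp_pos _).ne' (Real.exp_pos _).ne',
          Real.log_exp, Real.log_exp] at hll
      have hlog : Real.log (f t) ≤
          Real.log (f 0) + Real.log (D + B * t * Real.exp (ε * t)) - G t := by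
        have := hid t ht0.le
        simp only [hφdef] at this h3 ⊢
        linarith
      -- bound log(D + B t e^{εt}) by log(D + B t) + ε t
      have hDBt : (0:ℝ) < D + B * t := by positivity
      have h4 : Real.log (D + B * t * Real.exp (ε * t)) ≤
          Real.log (D + B * t) + ε * t := by
        have hexp1 : (1:ℝ) ≤ Real.exp (ε * t) := Real.one_le_exp (by positivity)
        have h5 : D + B * t * Real.exp (ε * t) ≤ (D + B * t) * Real.exp (ε * t) := by
          nlinarith
        calc Real.log (D + B * t * Real.exp (ε * t))
            ≤ Real.log ((D + B * t) * Real.exp (ε * t)) := Real.log_le_log hDBpos h5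
          _ = Real.log (D + B * t) + ε * t := by
              rw [Real.log_mul hDBt.ne' (Real.exp_pos _).ne', Real.log_exp]
      -- divide by t
      have hfinal : Real.log (f t) ≤
          Real.log (f 0) + (Real.log (D + B * t) + ε * t) - G t := by linarith
      have hdiv := div_le_div_of_nonneg_right hfinal ht0.le
      calc (1 / t) * Real.log (f t) = Real.log (f t) / t := by ring
        _ ≤ (Real.log (f 0) + (Real.log (D + B * t) + ε * t) - G t) / t := hdiv
        _ = Real.log (f 0) / t + (Real.log (D + B * t) / t + ε) - G t / t := by
            field_simp
    -- the bound function tends to ε < c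
    have hR : Tendsto (fun t => Real.log (f 0) / t + (Real.log (D + B * t) / t + ε) - G t / t)
        atTop (nhds ((0:ℝ) + (0 + ε) - 0)) := by
      refine Tendsto.sub (Tendsto.add ?_ (Tendsto.add ?_ tendsto_const_nhds)) hG
      · exact tendsto_const_nhds.div_atTop tendsto_id
      · have h1 : Tendsto (fun t : ℝ => D + B * t) atTop atTop :=
          tendsto_atTop_add_const_left _ D (Tendsto.const_mul_atTop hBpos tendsto_id)
        have h2 : (fun t : ℝ => Real.log (D + B * t)) =o[atTop] (fun t : ℝ => D + B * t) :=
          Real.isLittleO_log_id_atTop.comp_tendsto h1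
        have h3 : (fun t : ℝ => D + B * t) =O[atTop] (fun t : ℝ => t) := by
          apply Asymptotics.IsBigO.of_bound (D + B)
          filter_upwards [eventually_ge_atTop (1:ℝ)] with t ht
          have ht0 : (0:ℝ) ≤ t := zero_le_one.trans ht
          rw [Real.norm_eq_abs, Real.norm_eq_abs, abs_of_nonneg ht0,
            abs_of_nonneg (by positivity : (0:ℝ) ≤ D + B * t)]
          nlinarith
        exact (h2.trans_isBigO h3).tendsto_div_nhds_zero
    rw [show (0:ℝ) + (0 + ε) - 0 = ε by ring] at hR
    have hεc : ε < c := by rw [hεdef]; linarith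
    filter_upwards [hR.eventually_le_const hεc, eventually_ge_atTop T] with t h1 h2
    exact le_trans (hmain t h2) h1
  -- conclude the limsup bound
  rw [Filter.limsup_eq]
  by_cases hbdd : BddBelow {a : ℝ | ∀ᶠ t in atTop, (1 / t) * Real.log (f t) ≤ a}
  · exact le_of_forall_gt_imp_ge_of_dense fun c hc => csInf_le hbdd (key c hc)
  · rw [Real.sInf_of_not_bddBelow hbdd]
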